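/- The Gauss map is the jump transformation of the Farey map: for every irrational x ∈ (0,1), T(x) = F^{⌊1/x⌋}(x), where F^{n} denotes the n-fold iterate of the Farey map F. -/

import Mathlib

/-- The Gauss map `T : [0,1) → [0,1)`, `T 0 = 0` and `T x = 1/x - ⌊1/x⌋` for `x ≠ 0`. -/
noncomputable def gaussMap : ℝ → ℝ := fun x => if x = 0 then 0 else Int.fract (1 / x)

/-- The Farey map `F : [0,1] → [0,1]`: `F x = x/(1-x)` for `x ≤ 1/2` and
`F x = (1-x)/x` for `x ≥ 1/2`. -/
noncomputable def fareyMap : ℝ → ℝ := fun x => if x ≤ 1 / 2 then x / (1 - x) else (1 - x) / x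

lemma fareyMap_iter_aux (x : ℝ) (hx : 0 < x) :
    ∀ k : ℕ, ((k : ℝ) + 1) * x < 1 → fareyMap^[k] x = x / (1 - k * x) := by
  intro k
  induction k with
  | zero => intro _; simp
  | succ k ih =>
    intro hk
    have hk1 : ((k : ℝ) + 1) * x < 1 := by
      push_cast at hk ⊢; nlinarith
    have hden : 0 < 1 - (k : ℝ) * x := by nlinarith
    rw [Function.iterate_succ_apply', ih hk1]
    have hle : x / (1 - (k : ℝ) * x) ≤ 1 / 2 := by
      rw [div_le_div_iff₀ hden (by norm_num)]
      push_cast at hk; nlinarith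
    rw [fareyMap, if_pos hle]
    have h2 : 0 < 1 - ((k : ℝ) + 1) * x := by push_cast at hk; nlinarith
    have hdne : (1 - (k : ℝ) * x) ≠ 0 := hden.ne'
    have h2ne : (1 - ((k : ℝ) + 1) * x) ≠ 0 := h2.ne'
    have h3 : (1 - x / (1 - (k : ℝ) * x)) ≠ 0 := by
      rw [sub_ne_zero]
      intro h
      rw [eq_comm, div_eq_one_iff_eq hdne] at h
      push_cast at hk; nlinarith
    push_cast
    rw [div_eq_div_iff h3 h2ne]
    field_simp
    rw [eq_sub_iff_add_eq, ← add_div, div_eq_one_iff_eq (by rw [mul_comm]; exact hdne)]; ring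

/-- The Gauss map is the jump transformation of the Farey map: for every irrational
`x ∈ (0,1)`, `T x = F^[⌊1/x⌋] x`. -/
theorem gaussMap_eq_jump_fareyMap (x : ℝ) (hx : x ∈ Set.Ioo (0 : ℝ) 1)
    (hirr : Irrational x) :
    gaussMap x = fareyMap^[⌊1 / x⌋₊] x := by
  obtain ⟨hx0, hx1⟩ := hx
  have hinv : 1 < 1 / x := by rw [lt_div_iff₀ hx0]; linarith
  set n := ⌊1 / x⌋₊ with hn
  clear_value n
  have hirr' : Irrational (1 / x) := by
    rw [one_div]; exact hirr.inv
  have hlt : (n : ℝ) < 1 / x := by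
    rw [hn]
    exact lt_of_le_of_ne (Nat.floor_le (by positivity)) ((hirr'.ne_nat _).symm)
  have hlt' : 1 / x < (n : ℝ) + 1 := by rw [hn]; exact Nat.lt_floor_add_one _
  have hnx : (n : ℝ) * x < 1 := by
    rw [lt_div_iff₀ hx0] at hlt; linarith
  have h1nx : 1 < ((n : ℝ) + 1) * x := by
    rw [div_lt_iff₀ hx0] at hlt'; linarith
  have hn1 : 1 ≤ n := by rw [hn]; exact Nat.le_floor (α := ℝ) (by push_cast; linarith)
  obtain ⟨m, rfl⟩ : ∃ m, n = m + 1 := ⟨n - 1, (Nat.succ_pred_eq_of_pos hn1).symm⟩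
  have hm : ((m : ℝ) + 1) * x < 1 := by push_cast at hnx; linarith
  rw [Function.iterate_succ_apply', fareyMap_iter_aux x hx0 m hm]
  have hden : 0 < 1 - (m : ℝ) * x := by nlinarith
  have hgt : ¬ (x / (1 - (m : ℝ) * x) ≤ 1 / 2) := by
    rw [not_le, div_lt_div_iff₀ (by norm_num) hden]
    push_cast at h1nx; nlinarith
  rw [fareyMap, if_neg hgt]
  rw [gaussMap, if_neg hx0.ne', Int.fract]
  have hfl : ⌊(1 : ℝ) / x⌋ = (↑(m + 1) : ℤ) := by
    rw [Int.floor_eq_iff]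
    push_cast at hlt hlt' ⊢
    exact ⟨hlt.le, hlt'⟩
  rw [hfl]
  have hdne : (1 - (m : ℝ) * x) ≠ 0 := hden.ne'
  have hdne' : (1 - x * (m : ℝ)) ≠ 0 := by rw [mul_comm]; exact hdne
  push_cast
  field_simp
  ring
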